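/- The block approximation γ^δ of a transport plan γ ∈ Π(μ,ν) at scale δ ∈ (0,1) is again a transport plan: γ^δ ∈ Π(μ,ν), i.e. its first marginal is μ and its second marginal is ν. -/

import Mathlib

open MeasureTheory ENNReal Filter
open scoped Classical

noncomputable section

/-- ℝ^d with its Euclidean structure. -/
abbrev Rd (d : ℕ) := EuclideanSpace ℝ (Fin d)

/-- γ ∈ Π(μ,ν): γ has first marginal μ and second marginal ν. -/
def IsCoupling {E F : Type*} [MeasurableSpace E] [MeasurableSpace F]
    (γ : Measure (E × F)) (μ : Measure E) (ν : Measure F) : Prop :=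
  γ.map Prod.fst = μ ∧ γ.map Prod.snd = ν

/-- Relative entropy H(γ|ρ) = ∫ log(dγ/dρ) dγ if γ ≪ ρ (and the integral exists), +∞ otherwise. -/
def relEntropy {E : Type*} [MeasurableSpace E] (γ ρ : Measure E) : ℝ≥0∞ :=
  if γ ≪ ρ ∧ Integrable (llr γ ρ) γ then ENNReal.ofReal (∫ z, llr γ ρ z ∂γ) else ∞

/-- The entropic functional J_{p,ε}(γ) = (∫ c^p dγ + ε H(γ|μ⊗ν))^{1/p} on Π(μ,ν), +∞ outside. -/
def Jpe {d : ℕ} (c : Rd d × Rd d → ℝ) (μ ν : Measure (Rd d)) (p ε : ℝ)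
    (γ : Measure (Rd d × Rd d)) : ℝ≥0∞ :=
  if IsCoupling γ μ ν then
    (∫⁻ z, ENNReal.ofReal (c z ^ p) ∂γ + ENNReal.ofReal ε * relEntropy γ (μ.prod ν)) ^ (1 / p)
  else ∞

/-- The supremal functional J_∞(γ) = γ-ess sup c on Π(μ,ν), +∞ outside. -/
def Jinf {d : ℕ} (c : Rd d × Rd d → ℝ) (μ ν : Measure (Rd d))
    (γ : Measure (Rd d × Rd d)) : ℝ≥0∞ :=
  if IsCoupling γ μ ν then essSup (fun z => ENNReal.ofReal (c z)) γ else ∞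

/-- Weak-star convergence of a family of (probability) measures, as the real parameter p → ∞. -/
def WeakStarTendsto {E : Type*} [MeasurableSpace E] [TopologicalSpace E]
    (γ : ℝ → Measure E) (γ₀ : Measure E) : Prop :=
  ∀ f : BoundedContinuousFunction E ℝ,
    Tendsto (fun p => ∫ z, f z ∂(γ p)) atTop (nhds (∫ z, f z ∂γ₀))

/-- The support of a Borel measure: points all of whose neighborhoods have positive measure. -/
def msupport {E : Type*} [MeasurableSpace E] [TopologicalSpace E] (μ : Measure E) : Set E :=
  {x | ∀ U ∈ nhds x, μ U ≠ 0}

/-- The half-open cube Q_k^δ = δ(k + [0,1)^d). -/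
def blockCube (d : ℕ) (δ : ℝ) (k : Fin d → ℤ) : Set (Rd d) :=
  {x | ∀ i, x i ∈ Set.Ico (δ * k i) (δ * (k i + 1))}

/-- The normalized restriction μ_Q = μ(Q ∩ ·)/μ(Q). -/
def normRestrict {E : Type*} [MeasurableSpace E] (μ : Measure E) (Q : Set E) : Measure E :=
  (μ Q)⁻¹ • μ.restrict Q

/-- The block approximation γ^δ = ∑_{k,l} γ(Q_k^δ × Q_l^δ) μ_k^δ ⊗ ν_l^δ
    (terms with μ(Q_k^δ) = 0 or ν(Q_l^δ) = 0 vanish automatically). -/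
def blockApprox {d : ℕ} (μ ν : Measure (Rd d)) (γ : Measure (Rd d × Rd d)) (δ : ℝ) :
    Measure (Rd d × Rd d) :=
  Measure.sum (fun kl : (Fin d → ℤ) × (Fin d → ℤ) =>
    γ (blockCube d δ kl.1 ×ˢ blockCube d δ kl.2) •
      ((normRestrict μ (blockCube d δ kl.1)).prod (normRestrict ν (blockCube d δ kl.2))))

instance {E : Type*} [MeasurableSpace E] (μ : Measure E) [SFinite μ] (Q : Set E) :
    SFinite (normRestrict μ Q) := by unfold normRestrict; infer_instance

lemma measurableSet_blockCube (d : ℕ) (δ : ℝ) (k : Fin d → ℤ) :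
    MeasurableSet (blockCube d δ k) := by
  have : blockCube d δ k = ⋂ i, (fun x : Rd d => x i) ⁻¹' Set.Ico (δ * k i) (δ * (k i + 1)) := by
    ext x; simp [blockCube]
  rw [this]
  exact MeasurableSet.iInter fun i => (measurableSet_Ico).preimage
    ((measurable_pi_apply i).comp (MeasurableEquiv.toLp 2 (Fin d → ℝ)).symm.measurable)

lemma blockCube_disjoint (d : ℕ) {δ : ℝ} (hδ : 0 < δ) :
    Pairwise (Function.onFun Disjoint (blockCube d δ)) := by
  intro k l hkl
  rw [Function.onFun, Set.disjoint_left]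
  intro x hxk hxl
  apply hkl
  funext i
  have e : ∀ m : Fin d → ℤ, (∀ i, x i ∈ Set.Ico (δ * m i) (δ * (m i + 1))) → m i = ⌊x i / δ⌋ := by
    intro m hm
    have := hm i
    symm
    rw [Int.floor_eq_iff]
    constructor
    · rw [le_div_iff₀ hδ]; linarith [this.1]
    · rw [div_lt_iff₀ hδ]; push_cast; linarith [this.2]
  rw [e k hxk, e l hxl]

lemma blockCube_iUnion (d : ℕ) {δ : ℝ} (hδ : 0 < δ) :
    (⋃ k, blockCube d δ k) = Set.univ := by
  ext x
  simp only [Set.mem_iUnion, Set.mem_univ, iff_true]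
  refine ⟨fun i => ⌊x i / δ⌋, fun i => ⟨?_, ?_⟩⟩
  · have := Int.floor_le (x i / δ)
    calc δ * ⌊x i / δ⌋ ≤ δ * (x i / δ) := mul_le_mul_of_nonneg_left this hδ.le
    _ = x i := by field_simp
  · have : x i / δ < (⌊x i / δ⌋ : ℝ) + 1 := Int.lt_floor_add_one (x i / δ)
    calc x i = δ * (x i / δ) := by field_simp
    _ < δ * (⌊x i / δ⌋ + 1) := by apply mul_lt_mul_of_pos_left _ hδ; push_cast; linarith

-- mass * normalized restriction gives back the restriction (for finite measures)
lemma mass_mul_normRestrict {E : Type*} [MeasurableSpace E] (μ : Measure E)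
    [IsFiniteMeasure μ] (Q s : Set E) (hs : MeasurableSet s) :
    μ Q * (normRestrict μ Q) s = μ.restrict Q s := by
  by_cases h : μ Q = 0
  · have h2 : μ.restrict Q s = 0 := by
      rw [Measure.restrict_apply hs]
      exact le_antisymm (le_trans (measure_mono (Set.inter_subset_right)) h.le) zero_le
    simp [h, h2]
  · rw [normRestrict, Measure.smul_apply, smul_eq_mul, ← mul_assoc,
      ENNReal.mul_inv_cancel h (measure_ne_top μ _), one_mul]

lemma normRestrict_univ {E : Type*} [MeasurableSpace E] (μ : Measure E)
    [IsFiniteMeasure μ] {Q : Set E} (h : μ Q ≠ 0) :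
    (normRestrict μ Q) Set.univ = 1 := by
  rw [normRestrict, Measure.smul_apply, smul_eq_mul,
    Measure.restrict_apply MeasurableSet.univ, Set.univ_inter]
  exact ENNReal.inv_mul_cancel h (measure_ne_top μ _)

theorem blockApprox_fst {d : ℕ}
    (μ ν : Measure (Rd d)) [IsProbabilityMeasure μ] [IsProbabilityMeasure ν]
    (γ : Measure (Rd d × Rd d)) (hγC : IsCoupling γ μ ν)
    {δ : ℝ} (hδ : 0 < δ) :
    (blockApprox μ ν γ δ).map Prod.fst = μ := by
  set Q := blockCube d δ with hQ
  have mQ := measurableSet_blockCube d δ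
  ext s hs
  rw [Measure.map_apply measurable_fst hs, blockApprox,
    Measure.sum_apply _ (hs.preimage measurable_fst), ← Set.prod_univ]
  simp only [Measure.smul_apply, smul_eq_mul, Measure.prod_prod]
  rw [ENNReal.tsum_prod']
  have key : ∀ k : Fin d → ℤ,
      (∑' l, γ (Q k ×ˢ Q l) * ((normRestrict μ (Q k)) s * (normRestrict ν (Q l)) Set.univ))
        = μ.restrict (Q k) s := by
    intro k
    have step1 : ∀ l, γ (Q k ×ˢ Q l) * ((normRestrict μ (Q k)) s * (normRestrict ν (Q l)) Set.univ)
        = γ (Q k ×ˢ Q l) * (normRestrict μ (Q k)) s := by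
      intro l
      by_cases h : ν (Q l) = 0
      · have hγ0 : γ (Q k ×ˢ Q l) = 0 := by
          have h1 : γ (Q k ×ˢ Q l) ≤ γ (Prod.snd ⁻¹' Q l) :=
            measure_mono (fun z hz => hz.2)
          have h2 : γ (Prod.snd ⁻¹' Q l) = ν (Q l) := by
            rw [← hγC.2, Measure.map_apply measurable_snd (mQ l)]
          rw [h2, h] at h1; exact le_antisymm h1 zero_le
        simp [hγ0]
      · rw [normRestrict_univ ν h, mul_one]
    rw [tsum_congr step1, ENNReal.tsum_mul_right]
    have hsum : (∑' l, γ (Q k ×ˢ Q l)) = μ (Q k) := by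
      rw [← measure_iUnion (fun l l' hll' => Set.Disjoint.set_prod_right ((blockCube_disjoint d hδ) hll') _ _)
        (fun l => (mQ k).prod (mQ l)), ← Set.prod_iUnion, blockCube_iUnion d hδ,
        Set.prod_univ, ← hγC.1, Measure.map_apply measurable_fst (mQ k)]
    rw [hsum, mass_mul_normRestrict μ _ _ hs]
  rw [tsum_congr key]
  simp_rw [Measure.restrict_apply hs]
  rw [← measure_iUnion (fun k k' hkk' => ((blockCube_disjoint d hδ) hkk').mono
      Set.inter_subset_right Set.inter_subset_right) (fun k => hs.inter (mQ k)),
    ← Set.inter_iUnion, blockCube_iUnion d hδ, Set.inter_univ]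

theorem blockApprox_snd {d : ℕ}
    (μ ν : Measure (Rd d)) [IsProbabilityMeasure μ] [IsProbabilityMeasure ν]
    (γ : Measure (Rd d × Rd d)) (hγC : IsCoupling γ μ ν)
    {δ : ℝ} (hδ : 0 < δ) :
    (blockApprox μ ν γ δ).map Prod.snd = ν := by
  set Q := blockCube d δ with hQ
  have mQ := measurableSet_blockCube d δ
  ext s hs
  rw [Measure.map_apply measurable_snd hs, blockApprox,
    Measure.sum_apply _ (hs.preimage measurable_snd), ← Set.univ_prod]
  simp only [Measure.smul_apply, smul_eq_mul, Measure.prod_prod]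
  rw [ENNReal.tsum_prod', ENNReal.tsum_comm]
  have key : ∀ l : Fin d → ℤ,
      (∑' k, γ (Q k ×ˢ Q l) * ((normRestrict μ (Q k)) Set.univ * (normRestrict ν (Q l)) s))
        = ν.restrict (Q l) s := by
    intro l
    have step1 : ∀ k, γ (Q k ×ˢ Q l) * ((normRestrict μ (Q k)) Set.univ * (normRestrict ν (Q l)) s)
        = γ (Q k ×ˢ Q l) * (normRestrict ν (Q l)) s := by
      intro k
      by_cases h : μ (Q k) = 0
      · have hγ0 : γ (Q k ×ˢ Q l) = 0 := by
          have h1 : γ (Q k ×ˢ Q l) ≤ γ (Prod.fst ⁻¹' Q k) :=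
            measure_mono (fun z hz => hz.1)
          have h2 : γ (Prod.fst ⁻¹' Q k) = μ (Q k) := by
            rw [← hγC.1, Measure.map_apply measurable_fst (mQ k)]
          rw [h2, h] at h1; exact le_antisymm h1 zero_le
        simp [hγ0]
      · rw [normRestrict_univ μ h, one_mul]
    rw [tsum_congr step1, ENNReal.tsum_mul_right]
    have hsum : (∑' k, γ (Q k ×ˢ Q l)) = ν (Q l) := by
      rw [← measure_iUnion (fun k k' hkk' =>
          Set.Disjoint.set_prod_left ((blockCube_disjoint d hδ) hkk') _ _)
        (fun k => (mQ k).prod (mQ l)), ← Set.iUnion_prod_const, blockCube_iUnion d hδ,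
        Set.univ_prod, ← hγC.2, Measure.map_apply measurable_snd (mQ l)]
    rw [hsum, mass_mul_normRestrict ν _ _ hs]
  rw [tsum_congr key]
  simp_rw [Measure.restrict_apply hs]
  rw [← measure_iUnion (fun k k' hkk' => ((blockCube_disjoint d hδ) hkk').mono
      Set.inter_subset_right Set.inter_subset_right) (fun k => hs.inter (mQ k)),
    ← Set.inter_iUnion, blockCube_iUnion d hδ, Set.inter_univ]

/-- The block approximation of a transport plan is again a transport plan. -/
theorem blockApprox_isCoupling {d : ℕ}
    (μ ν : Measure (Rd d)) [IsProbabilityMeasure μ] [IsProbabilityMeasure ν]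
    (hμ : IsCompact (msupport μ)) (hν : IsCompact (msupport ν))
    (γ : Measure (Rd d × Rd d)) (hγP : IsProbabilityMeasure γ) (hγC : IsCoupling γ μ ν)
    (δ : ℝ) (hδ : δ ∈ Set.Ioo (0 : ℝ) 1) :
    IsProbabilityMeasure (blockApprox μ ν γ δ) ∧ IsCoupling (blockApprox μ ν γ δ) μ ν := by
  have h1 := blockApprox_fst μ ν γ hγC hδ.1
  have h2 := blockApprox_snd μ ν γ hγC hδ.1
  refine ⟨⟨?_⟩, h1, h2⟩
  have := congrArg (fun m : Measure (Rd d) => m Set.univ) h1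
  simpa [Measure.map_apply measurable_fst MeasurableSet.univ] using this
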